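/- arXiv:2209.01691 — 2 statements merged into one kernel-verified Lean document; each statement's English description precedes it below -/
import Mathlib

section
/- Let (Ω, μ) be a probability space, let n ≥ 1, let Y ∈ ℝⁿ be nonzero, let g : Ω → (Fin n → ℝ) satisfy gᵢ = Yᵢ almost surely for each i, and let h : Ω → ℝ be integrable with each product h·gᵢ integrable. Define the data–data kernel matrix K ∈ ℝ^(n×n) by Kᵢⱼ = E[gᵢ gⱼ] and the kernel row vector k ∈ ℝⁿ by kᵢ = E[h gᵢ]. Then: (1) K = Y Yᵀ; (2) k = E[h] · Y; and (3) for every matrix B ∈ ℝ^(n×n) satisfying the four Moore–Penrose equations for K (K B K = K, B K B = B, (K B)ᵀ = K B, (B K)ᵀ = B K), the kernel regression prediction kᵀ B Y equals E[h]. -/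
open MeasureTheory Matrix

/-- With the posterior kernel, the data–data kernel matrix is `Y Yᵀ`, the
kernel row vector is `E[h] • Y`, and the kernel regression prediction (computed via any
Moore–Penrose pseudoinverse) equals the posterior mean `E[h]`. -/
theorem optimal_posterior_kernel {Ω : Type*} [MeasurableSpace Ω] (μ : Measure Ω)
    [IsProbabilityMeasure μ]
    (n : ℕ) (hn : 1 ≤ n) (Y : Fin n → ℝ) (hY : Y ≠ 0)
    (g : Ω → Fin n → ℝ) (hg : ∀ i, ∀ᵐ ω ∂μ, g ω i = Y i)
    (h : Ω → ℝ) (hh : Integrable h μ)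
    (hhg : ∀ i, Integrable (fun ω => h ω * g ω i) μ)
    (K : Matrix (Fin n) (Fin n) ℝ) (hK : ∀ i j, K i j = ∫ ω, g ω i * g ω j ∂μ)
    (k : Fin n → ℝ) (hk : ∀ i, k i = ∫ ω, h ω * g ω i ∂μ) :
    K = Matrix.vecMulVec Y Y ∧
    k = (∫ ω, h ω ∂μ) • Y ∧
    ∀ B : Matrix (Fin n) (Fin n) ℝ,
      K * B * K = K → B * K * B = B → (K * B)ᵀ = K * B → (B * K)ᵀ = B * K →
      k ⬝ᵥ B.mulVec Y = ∫ ω, h ω ∂μ := by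
  have hKY : K = Matrix.vecMulVec Y Y := by
    ext i j
    rw [hK i j, Matrix.vecMulVec_apply]
    have : (∫ ω, g ω i * g ω j ∂μ) = ∫ _ω, Y i * Y j ∂μ := by
      refine integral_congr_ae ?_
      filter_upwards [hg i, hg j] with ω h1 h2
      rw [h1, h2]
    rw [this, integral_const, probReal_univ]
    simp
  have hkY : k = (∫ ω, h ω ∂μ) • Y := by
    funext i
    rw [hk i]
    have : (∫ ω, h ω * g ω i ∂μ) = ∫ ω, h ω * Y i ∂μ := by
      refine integral_congr_ae ?_
      filter_upwards [hg i] with ω h1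
      rw [h1]
    rw [this, integral_mul_const]
    simp [mul_comm]
  refine ⟨hKY, hkY, ?_⟩
  intro B h1 _ _ _
  -- let c be the scalar Yᵀ B Y
  set c : ℝ := Y ⬝ᵥ B.mulVec Y with hc
  -- K*B*K = c • K
  have hKBK : K * B * K = c • K := by
    subst hKY
    ext i j
    simp only [Matrix.mul_apply, Matrix.vecMulVec_apply, Matrix.smul_apply, smul_eq_mul, hc,
      dotProduct, Matrix.mulVec, Finset.sum_mul, Finset.mul_sum]
    rw [Finset.sum_comm]
    refine Finset.sum_congr rfl fun a _ => Finset.sum_congr rfl fun b _ => ?_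
    ring
  have hc1 : c = 1 := by
    have hKne : K ≠ 0 := by
      obtain ⟨i, hi⟩ := Function.ne_iff.mp hY
      have hi' : Y i ≠ 0 := by simpa using hi
      intro hK0
      have := congrFun (congrFun (hK0 ▸ hKY.symm) i) i
      simp only [Matrix.vecMulVec_apply, Matrix.zero_apply] at this
      exact hi' (by nlinarith [this])
    have := h1.symm.trans hKBK
    by_contra hne
    apply hKne
    have : (c - 1) • K = 0 := by
      rw [sub_smul, one_smul, ← this, sub_self]
    have hc0 : c - 1 ≠ 0 := sub_ne_zero.mpr hne
    ext i j
    have := congrFun (congrFun this i) j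
    simp only [Matrix.smul_apply, smul_eq_mul, Matrix.zero_apply] at this
    have := mul_eq_zero.mp this
    simpa [hc0] using this
  rw [hkY]
  have : ((∫ ω, h ω ∂μ) • Y) ⬝ᵥ B.mulVec Y = (∫ ω, h ω ∂μ) * (Y ⬝ᵥ B.mulVec Y) := by
    simp [smul_dotProduct]
  rw [this, ← hc, hc1, mul_one]
end

section
/- Let (Ω, ℱ, μ) be a probability space, let 𝒢 ⊆ ℱ be a sub-σ-algebra, let n ≥ 1, let g : Ω → (Fin n → ℝ) be 𝒢-measurable with each gᵢ square-integrable, and let h : Ω → ℝ be square-integrable. Then, almost surely: (1) for all i, j, the conditional expectation satisfies E[gᵢ gⱼ | 𝒢] = gᵢ gⱼ, so the conditional data–data kernel matrix equals g gᵀ; (2) for all i, E[h gᵢ | 𝒢] = gᵢ · E[h | 𝒢]; and (3) at almost every ω with g(ω) ≠ 0, the kernel regression prediction with the conditional kernel equals the conditional mean: Σᵢ E[h gᵢ | 𝒢](ω) · gᵢ(ω) / ‖g(ω)‖² = E[h | 𝒢](ω), which is exactly kᵀ(ω) B(ω) g(ω) with B(ω) = ‖g(ω)‖⁻⁴ g(ω)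 g(ω)ᵀ the Moore–Penrose pseudoinverse of g(ω) g(ω)ᵀ and kᵢ(ω) = E[h gᵢ | 𝒢](ω). -/
open MeasureTheory Matrix

/-- Generalized optimal posterior kernel. For a sub-σ-algebra `m`, a
`m`-measurable square-integrable vector `g` and square-integrable `h`: the conditional
data–data kernel matrix is `g gᵀ`, the conditional kernel vector is `g • E[h|m]`, and
wherever `g ≠ 0` the kernel regression prediction with the conditional kernel equals the
conditional mean `E[h|m]`. -/
theorem generalized_optimal_posterior_kernel {Ω : Type*} {ℱ : MeasurableSpace Ω}
    (μ : Measure Ω) [IsProbabilityMeasure μ]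
    (m : MeasurableSpace Ω) (hm : m ≤ ℱ)
    (n : ℕ) (hn : 1 ≤ n)
    (g : Ω → Fin n → ℝ) (hgm : ∀ i, StronglyMeasurable[m] (fun ω => g ω i))
    (hg2 : ∀ i, MemLp (fun ω => g ω i) 2 μ)
    (h : Ω → ℝ) (hh2 : MemLp h 2 μ) :
    (∀ i j, μ[(fun ω => g ω i * g ω j)|m] =ᵐ[μ] fun ω => g ω i * g ω j) ∧
    (∀ i, μ[(fun ω => h ω * g ω i)|m] =ᵐ[μ] fun ω => g ω i * (μ[h|m]) ω) ∧
    (∀ᵐ ω ∂μ, g ω ≠ 0 →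
      (∑ i, (μ[(fun ω' => h ω' * g ω' i)|m]) ω * g ω i) / (∑ i, g ω i ^ 2) =
        (μ[h|m]) ω) := by
  have hSF : SigmaFinite (μ.trim hm) := by
    have : IsFiniteMeasure (μ.trim hm) := isFiniteMeasure_trim hm
    infer_instance
  have hmul : ∀ (f₁ f₂ : Ω → ℝ), MemLp f₁ 2 μ → MemLp f₂ 2 μ →
      Integrable (fun ω => f₁ ω * f₂ ω) μ := by
    intro f₁ f₂ h₁ h₂
    have : MemLp (f₁ • f₂) 1 μ := MemLp.smul h₂ h₁
    exact this.integrable le_rfl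
  have key : ∀ i, μ[(fun ω => h ω * g ω i)|m] =ᵐ[μ] fun ω => g ω i * (μ[h|m]) ω := by
    intro i
    have hInt : Integrable (fun ω => g ω i * h ω) μ := hmul _ _ (hg2 i) hh2
    have hInt' : Integrable h μ := hh2.integrable one_le_two
    have := condExp_mul_of_stronglyMeasurable_left (m := m) (μ := μ) (hgm i) hInt hInt'
    have hcomm : (fun ω => h ω * g ω i) = (fun ω => g ω i) * h := by
      funext ω; simp [mul_comm]
    rw [hcomm]
    exact this
  refine ⟨?_, key, ?_⟩
  · intro i j
    have hInt : Integrable (fun ω => g ω i * g ω j) μ := hmul _ _ (hg2 i) (hg2 j)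
    rw [condExp_of_stronglyMeasurable hm
      (f := fun ω => g ω i * g ω j) ((hgm i).mul (hgm j)) hInt]
  · have hall : ∀ᵐ ω ∂μ, ∀ i,
        (μ[(fun ω' => h ω' * g ω' i)|m]) ω = g ω i * (μ[h|m]) ω :=
      (ae_all_iff).2 key
    filter_upwards [hall] with ω hω hne
    have hpos : 0 < ∑ i, g ω i ^ 2 := by
      rcases Function.ne_iff.1 hne with ⟨i, hi⟩
      exact Finset.sum_pos' (fun j _ => sq_nonneg _)
        ⟨i, Finset.mem_univ i, lt_of_le_of_ne (sq_nonneg _) (Ne.symm (pow_ne_zero 2 hi))⟩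
    have : (∑ i, (μ[(fun ω' => h ω' * g ω' i)|m]) ω * g ω i)
        = (∑ i, g ω i ^ 2) * (μ[h|m]) ω := by
      rw [Finset.sum_mul]
      refine Finset.sum_congr rfl fun i _ => ?_
      rw [hω i]; ring
    rw [this]
    field_simp
end
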